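/- (Proposition 2, variance reduction.) Under the stationarity, independence, L²-mixing and time-reversibility assumptions, the covariance Cov(δ(X_τ, X₀, V_τ), δ(X₀, X_τ, −V₀)) converges to 0 as τ → ∞, i.e. the two estimators are asymptotically uncorrelated; consequently, if in addition liminf_{τ→∞} Var(δ(X_τ, X₀, V_τ)) > 0, then Var(g_τ)/Var(δ(X_τ, X₀, V_τ)) → 1/2 as τ → ∞. -/

import Mathlib

open Matrix MeasureTheory ProbabilityTheory Filter

/-- The continuous linear map `y ↦ ∑ i, g i * y i`, i.e. the dot product with `g`;
used to say that a function has gradient `g` at a point. -/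
noncomputable def dotCLM {d : ℕ} (g : Fin d → ℝ) : (Fin d → ℝ) →L[ℝ] ℝ :=
  ∑ i, g i • ContinuousLinearMap.proj i

/-- `gradEstimator φ gradφ M x y v = (φ(x) - φ(y)) · (∇φ(x)ᵀ M⁻¹ v)`, the unbiased
estimator `δ` of the derivative of the expected squared jumping distance. -/
noncomputable def gradEstimator {d : ℕ} (φ : (Fin d → ℝ) → ℝ)
    (gradφ : (Fin d → ℝ) → (Fin d → ℝ)) (M : Matrix (Fin d) (Fin d) ℝ)
    (x y v : Fin d → ℝ) : ℝ :=
  (φ x - φ y) * (gradφ x ⬝ᵥ M⁻¹.mulVec v)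


lemma dotCLM_apply {d : ℕ} (g v : Fin d → ℝ) : dotCLM g v = g ⬝ᵥ v := by
  simp [dotCLM, dotProduct]

lemma gradphi_cont {d : ℕ} {φ : (Fin d → ℝ) → ℝ} {gradφ : (Fin d → ℝ) → (Fin d → ℝ)}
    (hφ : ContDiff ℝ 1 φ) (hgradφ : ∀ y, HasFDerivAt φ (dotCLM (gradφ y)) y) :
    Continuous gradφ := by
  have h1 : Continuous (fderiv ℝ φ) := hφ.continuous_fderiv one_ne_zero
  have h3 : ∀ y i, gradφ y i = fderiv ℝ φ y (Pi.single i 1) := by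
    intro y i
    rw [(hgradφ y).fderiv, dotCLM_apply]
    simp [dotProduct, Pi.single_apply]
  have h4 : Continuous fun y => fun i : Fin d => fderiv ℝ φ y (Pi.single i 1) :=
    continuous_pi fun i => h1.clm_apply continuous_const
  have h5 : gradφ = fun y => fun i : Fin d => fderiv ℝ φ y (Pi.single i 1) := by
    funext y i; exact h3 y i
  rw [h5]; exact h4

lemma memL2_mul_integrable {Ω : Type*} [MeasurableSpace Ω] {μ : MeasureTheory.Measure Ω}
    [MeasureTheory.IsProbabilityMeasure μ] {f g : Ω → ℝ}
    (hf : MeasureTheory.MemLp f 2 μ) (hg : MeasureTheory.MemLp g 2 μ) :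
    MeasureTheory.Integrable (fun a => f a * g a) μ := by
  have h : MeasureTheory.MemLp (f • g) 1 μ :=
    hg.smul hf (hpqr := ⟨by simp [ENNReal.inv_two_add_inv_two]⟩)
  exact h.integrable le_rfl

lemma ge_mul_expand {d : ℕ} (φ : (Fin d → ℝ) → ℝ) (gradφ : (Fin d → ℝ) → (Fin d → ℝ))
    (M : Matrix (Fin d) (Fin d) ℝ) (x y v w : Fin d → ℝ) :
    gradEstimator φ gradφ M x y v * gradEstimator φ gradφ M y x (-w)
      = (φ x ^ 2 * (gradφ x ⬝ᵥ M⁻¹.mulVec v)) * (gradφ y ⬝ᵥ M⁻¹.mulVec w)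
        - 2 * ((φ x * (gradφ x ⬝ᵥ M⁻¹.mulVec v)) * (φ y * (gradφ y ⬝ᵥ M⁻¹.mulVec w)))
        + (gradφ x ⬝ᵥ M⁻¹.mulVec v) * (φ y ^ 2 * (gradφ y ⬝ᵥ M⁻¹.mulVec w)) := by
  simp only [gradEstimator, Matrix.mulVec_neg, dotProduct_neg]
  ring

/-- Proposition 2 (variance reduction): under stationarity, independence, L²-mixing and
time-reversibility, `Cov(δ(X_τ, X₀, V_τ), δ(X₀, X_τ, -V₀)) → 0` as `τ → ∞` (the two
estimators are asymptotically uncorrelated); consequently, if moreover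
`liminf Var(δ(X_τ, X₀, V_τ)) > 0` as `τ → ∞`, then `Var(g_τ)/Var(δ(X_τ, X₀, V_τ)) → 1/2`,
where `g_τ = (δ(X_τ, X₀, V_τ) + δ(X₀, X_τ, -V₀))/2`. -/
theorem variance_reduction {d : ℕ}
    (M : Matrix (Fin d) (Fin d) ℝ) (hMsymm : M.IsSymm) (hMpd : M.PosDef)
    (φ : (Fin d → ℝ) → ℝ) (gradφ : (Fin d → ℝ) → (Fin d → ℝ))
    (hφ : ContDiff ℝ 1 φ) (hgradφ : ∀ y, HasFDerivAt φ (dotCLM (gradφ y)) y)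
    {Ω : Type*} [MeasurableSpace Ω] (μ : Measure Ω) [IsProbabilityMeasure μ]
    (X V : ℝ → Ω → Fin d → ℝ)
    (hXmeas : ∀ τ, Measurable (X τ)) (hVmeas : ∀ τ, Measurable (V τ))
    -- stationarity: the law of (X_τ, V_τ) equals the law Π* of (X₀, V₀)
    (hstat : ∀ τ ≥ (0 : ℝ),
      Measure.map (fun a => (X τ a, V τ a)) μ = Measure.map (fun a => (X 0 a, V 0 a)) μ)
    -- independence: V₀ is integrable, centered, and independent of X₀
    (hVint : Integrable (V 0) μ) (hVcentered : ∫ a, V 0 a ∂μ = 0)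
    (hindep : IndepFun (X 0) (V 0) μ)
    -- L²-mixing
    (hmix : ∀ ψ ω : (Fin d → ℝ) × (Fin d → ℝ) → ℝ,
      MemLp ψ 2 (Measure.map (fun a => (X 0 a, V 0 a)) μ) →
      MemLp ω 2 (Measure.map (fun a => (X 0 a, V 0 a)) μ) →
      Tendsto (fun τ => ∫ a, ψ (X τ a, V τ a) * ω (X 0 a, V 0 a) ∂μ) atTop
        (nhds ((∫ a, ψ (X 0 a, V 0 a) ∂μ) * ∫ a, ω (X 0 a, V 0 a) ∂μ)))
    -- square-integrability of the relevant observables under Π*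
    (hL2a : MemLp (fun p : (Fin d → ℝ) × (Fin d → ℝ) => φ p.1) 2
      (Measure.map (fun a => (X 0 a, V 0 a)) μ))
    (hL2b : MemLp (fun p : (Fin d → ℝ) × (Fin d → ℝ) => gradφ p.1 ⬝ᵥ M⁻¹.mulVec p.2) 2
      (Measure.map (fun a => (X 0 a, V 0 a)) μ))
    (hL2c : MemLp (fun p : (Fin d → ℝ) × (Fin d → ℝ) =>
        φ p.1 * (gradφ p.1 ⬝ᵥ M⁻¹.mulVec p.2)) 2
      (Measure.map (fun a => (X 0 a, V 0 a)) μ))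
    (hL2d : MemLp (fun p : (Fin d → ℝ) × (Fin d → ℝ) => φ p.1 ^ 2) 2
      (Measure.map (fun a => (X 0 a, V 0 a)) μ))
    (hL2e : MemLp (fun p : (Fin d → ℝ) × (Fin d → ℝ) =>
        φ p.1 ^ 2 * (gradφ p.1 ⬝ᵥ M⁻¹.mulVec p.2)) 2
      (Measure.map (fun a => (X 0 a, V 0 a)) μ))
    -- time-reversibility: (X_τ, V_τ, X₀, V₀) and (X₀, -V₀, X_τ, -V_τ) have the same law
    (hrev : ∀ τ ≥ (0 : ℝ),
      Measure.map (fun a => (X τ a, V τ a, X 0 a, V 0 a)) μ =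
      Measure.map (fun a => (X 0 a, -V 0 a, X τ a, -V τ a)) μ)
    -- square-integrability of δ(X_τ, X₀, V_τ), δ(X₀, X_τ, -V₀) and g_τ
    (hδL2 : ∀ τ : ℝ,
      MemLp (fun a => gradEstimator φ gradφ M (X τ a) (X 0 a) (V τ a)) 2 μ)
    (hδrevL2 : ∀ τ : ℝ,
      MemLp (fun a => gradEstimator φ gradφ M (X 0 a) (X τ a) (-V 0 a)) 2 μ)
    (hgL2 : ∀ τ : ℝ,
      MemLp (fun a => (1 / 2) * (gradEstimator φ gradφ M (X τ a) (X 0 a) (V τ a) +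
        gradEstimator φ gradφ M (X 0 a) (X τ a) (-V 0 a))) 2 μ) :
    Tendsto (fun τ =>
        (∫ a, gradEstimator φ gradφ M (X τ a) (X 0 a) (V τ a) *
          gradEstimator φ gradφ M (X 0 a) (X τ a) (-V 0 a) ∂μ) -
        (∫ a, gradEstimator φ gradφ M (X τ a) (X 0 a) (V τ a) ∂μ) *
          ∫ a, gradEstimator φ gradφ M (X 0 a) (X τ a) (-V 0 a) ∂μ)
      atTop (nhds 0) ∧
    (0 < Filter.liminf
        (fun τ => variance (fun a => gradEstimator φ gradφ M (X τ a) (X 0 a) (V τ a)) μ)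
        atTop →
      Tendsto (fun τ =>
          variance (fun a => (1 / 2) * (gradEstimator φ gradφ M (X τ a) (X 0 a) (V τ a) +
            gradEstimator φ gradφ M (X 0 a) (X τ a) (-V 0 a))) μ /
          variance (fun a => gradEstimator φ gradφ M (X τ a) (X 0 a) (V τ a)) μ)
        atTop (nhds (1 / 2))) := by
  classical
  have hpm : ∀ τ : ℝ, Measurable fun a => (X τ a, V τ a) :=
    fun τ => (hXmeas τ).prodMk (hVmeas τ)
  have hφc : Continuous φ := hφ.continuous
  have hgc : Continuous gradφ := gradphi_cont hφ hgradφ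
  have hbc : Continuous fun p : (Fin d → ℝ) × (Fin d → ℝ) => gradφ p.1 ⬝ᵥ M⁻¹.mulVec p.2 :=
    (hgc.comp continuous_fst).dotProduct (continuous_const.matrix_mulVec continuous_snd)
  have hcc : Continuous fun p : (Fin d → ℝ) × (Fin d → ℝ) =>
      φ p.1 * (gradφ p.1 ⬝ᵥ M⁻¹.mulVec p.2) := (hφc.comp continuous_fst).mul hbc
  have hec : Continuous fun p : (Fin d → ℝ) × (Fin d → ℝ) =>
      φ p.1 ^ 2 * (gradφ p.1 ⬝ᵥ M⁻¹.mulVec p.2) :=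
    ((hφc.comp continuous_fst).pow 2).mul hbc
  have hφ'c : Continuous fun p : (Fin d → ℝ) × (Fin d → ℝ) => φ p.1 := hφc.comp continuous_fst
  set Pst := Measure.map (fun a => (X 0 a, V 0 a)) μ with hPidef
  haveI : IsProbabilityMeasure Pst := Measure.isProbabilityMeasure_map (hpm 0).aemeasurable
  -- transfer of integrals and L² membership from Π* to μ
  have hIval : ∀ (τ : ℝ), 0 ≤ τ → ∀ f : (Fin d → ℝ) × (Fin d → ℝ) → ℝ, Continuous f →
      ∫ a, f (X τ a, V τ a) ∂μ = ∫ p, f p ∂Pst := by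
    intro τ hτ f hf
    rw [← integral_map (hpm τ).aemeasurable hf.aestronglyMeasurable, hstat τ hτ]
  have hImem : ∀ (τ : ℝ), 0 ≤ τ → ∀ f : (Fin d → ℝ) × (Fin d → ℝ) → ℝ, Continuous f →
      MemLp f 2 Pst → MemLp (fun a => f (X τ a, V τ a)) 2 μ := by
    intro τ hτ f hf hf2
    exact (memLp_map_measure_iff hf.aestronglyMeasurable (hpm τ).aemeasurable).mp
      (by rw [hstat τ hτ]; exact hf2)
  -- zero means under Π*
  have hprod : Pst = (Measure.map (X 0) μ).prod (Measure.map (V 0) μ) := by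
    rw [hPidef]
    exact (indepFun_iff_map_prod_eq_prod_map_map (hXmeas 0).aemeasurable
      (hVmeas 0).aemeasurable).mp hindep
  have hVlawint : Integrable (fun v : Fin d → ℝ => v) (Measure.map (V 0) μ) :=
    (integrable_map_measure aestronglyMeasurable_id (hVmeas 0).aemeasurable).mpr hVint
  have hVlawmean : ∫ v : Fin d → ℝ, v ∂(Measure.map (V 0) μ) = 0 := by
    have h := integral_map (μ := μ) (φ := V 0) (hVmeas 0).aemeasurable
      (f := fun v : Fin d → ℝ => v) aestronglyMeasurable_id
    rw [h]
    exact hVcentered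
  have hzero : ∀ h : (Fin d → ℝ) → ℝ,
      Integrable (fun p : (Fin d → ℝ) × (Fin d → ℝ) =>
        h p.1 * (gradφ p.1 ⬝ᵥ M⁻¹.mulVec p.2)) Pst →
      ∫ p : (Fin d → ℝ) × (Fin d → ℝ), h p.1 * (gradφ p.1 ⬝ᵥ M⁻¹.mulVec p.2) ∂Pst = 0 := by
    intro h hint
    rw [hprod] at hint ⊢
    rw [integral_prod _ hint]
    have inner0 : ∀ x : Fin d → ℝ,
        ∫ v : Fin d → ℝ, h x * (gradφ x ⬝ᵥ M⁻¹.mulVec v) ∂(Measure.map (V 0) μ) = 0 := by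
      intro x
      have hfun : ∀ v : Fin d → ℝ, h x * (gradφ x ⬝ᵥ M⁻¹.mulVec v)
          = (h x • dotCLM (Matrix.vecMul (gradφ x) M⁻¹)) v := by
        intro v
        rw [ContinuousLinearMap.smul_apply, dotCLM_apply, smul_eq_mul,
          ← Matrix.dotProduct_mulVec]
      simp_rw [hfun]
      rw [ContinuousLinearMap.integral_comp_comm _ hVlawint, hVlawmean]
      simp
    simp_rw [inner0]
    simp
  have Ib : ∫ p : (Fin d → ℝ) × (Fin d → ℝ), (gradφ p.1 ⬝ᵥ M⁻¹.mulVec p.2) ∂Pst = 0 := by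
    have h := hzero (fun _ => 1) (by simpa using hL2b.integrable one_le_two)
    simpa using h
  have Ic : ∫ p : (Fin d → ℝ) × (Fin d → ℝ), φ p.1 * (gradφ p.1 ⬝ᵥ M⁻¹.mulVec p.2) ∂Pst = 0 :=
    hzero φ (hL2c.integrable one_le_two)
  have Ie : ∫ p : (Fin d → ℝ) × (Fin d → ℝ),
      φ p.1 ^ 2 * (gradφ p.1 ⬝ᵥ M⁻¹.mulVec p.2) ∂Pst = 0 :=
    hzero (fun x => φ x ^ 2) (hL2e.integrable one_le_two)
  -- means at the level of μ
  have mb : ∫ a, (gradφ (X 0 a) ⬝ᵥ M⁻¹.mulVec (V 0 a)) ∂μ = 0 := by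
    rw [hIval 0 le_rfl _ hbc]; exact Ib
  have mc : ∫ a, φ (X 0 a) * (gradφ (X 0 a) ⬝ᵥ M⁻¹.mulVec (V 0 a)) ∂μ = 0 := by
    rw [hIval 0 le_rfl _ hcc]; exact Ic
  have me : ∫ a, φ (X 0 a) ^ 2 * (gradφ (X 0 a) ⬝ᵥ M⁻¹.mulVec (V 0 a)) ∂μ = 0 := by
    rw [hIval 0 le_rfl _ hec]; exact Ie
  -- mixing limits
  have Tm1 := hmix _ _ hL2e hL2b
  rw [mb, mul_zero] at Tm1
  have Tm2 := hmix _ _ hL2c hL2c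
  rw [mc, mul_zero] at Tm2
  have Tm3 := hmix _ _ hL2b hL2e
  rw [mb, zero_mul] at Tm3
  have Tm4 := hmix _ _ hL2b hL2a
  rw [mb, zero_mul] at Tm4
  -- the product integral eventually expands into mixing terms
  have hPev : ∀ᶠ τ in atTop, (∫ a, gradEstimator φ gradφ M (X τ a) (X 0 a) (V τ a) *
      gradEstimator φ gradφ M (X 0 a) (X τ a) (-V 0 a) ∂μ)
      = (∫ a, (φ (X τ a) ^ 2 * (gradφ (X τ a) ⬝ᵥ M⁻¹.mulVec (V τ a))) *
          (gradφ (X 0 a) ⬝ᵥ M⁻¹.mulVec (V 0 a)) ∂μ)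
        - 2 * (∫ a, (φ (X τ a) * (gradφ (X τ a) ⬝ᵥ M⁻¹.mulVec (V τ a))) *
          (φ (X 0 a) * (gradφ (X 0 a) ⬝ᵥ M⁻¹.mulVec (V 0 a))) ∂μ)
        + ∫ a, (gradφ (X τ a) ⬝ᵥ M⁻¹.mulVec (V τ a)) *
          (φ (X 0 a) ^ 2 * (gradφ (X 0 a) ⬝ᵥ M⁻¹.mulVec (V 0 a))) ∂μ := by
    filter_upwards [eventually_ge_atTop (0 : ℝ)] with τ hτ
    have ie : Integrable (fun a => (φ (X τ a) ^ 2 * (gradφ (X τ a) ⬝ᵥ M⁻¹.mulVec (V τ a))) *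
        (gradφ (X 0 a) ⬝ᵥ M⁻¹.mulVec (V 0 a))) μ :=
      memL2_mul_integrable (hImem τ hτ _ hec hL2e) (hImem 0 le_rfl _ hbc hL2b)
    have ic : Integrable (fun a => (φ (X τ a) * (gradφ (X τ a) ⬝ᵥ M⁻¹.mulVec (V τ a))) *
        (φ (X 0 a) * (gradφ (X 0 a) ⬝ᵥ M⁻¹.mulVec (V 0 a)))) μ :=
      memL2_mul_integrable (hImem τ hτ _ hcc hL2c) (hImem 0 le_rfl _ hcc hL2c)
    have ib : Integrable (fun a => (gradφ (X τ a) ⬝ᵥ M⁻¹.mulVec (V τ a)) *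
        (φ (X 0 a) ^ 2 * (gradφ (X 0 a) ⬝ᵥ M⁻¹.mulVec (V 0 a)))) μ :=
      memL2_mul_integrable (hImem τ hτ _ hbc hL2b) (hImem 0 le_rfl _ hec hL2e)
    have hpt : ∀ a, gradEstimator φ gradφ M (X τ a) (X 0 a) (V τ a) *
        gradEstimator φ gradφ M (X 0 a) (X τ a) (-V 0 a)
        = (φ (X τ a) ^ 2 * (gradφ (X τ a) ⬝ᵥ M⁻¹.mulVec (V τ a))) *
          (gradφ (X 0 a) ⬝ᵥ M⁻¹.mulVec (V 0 a))
        - 2 * ((φ (X τ a) * (gradφ (X τ a) ⬝ᵥ M⁻¹.mulVec (V τ a))) *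
          (φ (X 0 a) * (gradφ (X 0 a) ⬝ᵥ M⁻¹.mulVec (V 0 a))))
        + (gradφ (X τ a) ⬝ᵥ M⁻¹.mulVec (V τ a)) *
          (φ (X 0 a) ^ 2 * (gradφ (X 0 a) ⬝ᵥ M⁻¹.mulVec (V 0 a))) :=
      fun a => ge_mul_expand φ gradφ M (X τ a) (X 0 a) (V τ a) (V 0 a)
    have ic2 : Integrable (fun a => 2 * ((φ (X τ a) * (gradφ (X τ a) ⬝ᵥ M⁻¹.mulVec (V τ a))) *
        (φ (X 0 a) * (gradφ (X 0 a) ⬝ᵥ M⁻¹.mulVec (V 0 a))))) μ := ic.const_mul 2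
    have isub : Integrable (fun a => (φ (X τ a) ^ 2 * (gradφ (X τ a) ⬝ᵥ M⁻¹.mulVec (V τ a))) *
        (gradφ (X 0 a) ⬝ᵥ M⁻¹.mulVec (V 0 a)) -
        2 * ((φ (X τ a) * (gradφ (X τ a) ⬝ᵥ M⁻¹.mulVec (V τ a))) *
        (φ (X 0 a) * (gradφ (X 0 a) ⬝ᵥ M⁻¹.mulVec (V 0 a))))) μ := ie.sub ic2
    rw [integral_congr_ae (Eventually.of_forall hpt),
      integral_add isub ib, integral_sub ie ic2, integral_const_mul]
  have hPlim : Tendsto (fun τ => ∫ a, gradEstimator φ gradφ M (X τ a) (X 0 a) (V τ a) *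
      gradEstimator φ gradφ M (X 0 a) (X τ a) (-V 0 a) ∂μ) atTop (nhds 0) := by
    have h := (Tm1.sub (Tm2.const_mul 2)).add Tm3
    norm_num at h
    exact Tendsto.congr' (hPev.mono fun τ hτ => hτ.symm) h
  -- mean of δ_τ tends to 0
  have hMev : ∀ᶠ τ in atTop, (∫ a, gradEstimator φ gradφ M (X τ a) (X 0 a) (V τ a) ∂μ)
      = - ∫ a, (gradφ (X τ a) ⬝ᵥ M⁻¹.mulVec (V τ a)) * φ (X 0 a) ∂μ := by
    filter_upwards [eventually_ge_atTop (0 : ℝ)] with τ hτ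
    have ic : Integrable (fun a => φ (X τ a) * (gradφ (X τ a) ⬝ᵥ M⁻¹.mulVec (V τ a))) μ :=
      (hImem τ hτ _ hcc hL2c).integrable one_le_two
    have ib : Integrable (fun a => (gradφ (X τ a) ⬝ᵥ M⁻¹.mulVec (V τ a)) * φ (X 0 a)) μ :=
      memL2_mul_integrable (hImem τ hτ _ hbc hL2b) (hImem 0 le_rfl _ hφ'c hL2a)
    have hpt : ∀ a, gradEstimator φ gradφ M (X τ a) (X 0 a) (V τ a)
        = φ (X τ a) * (gradφ (X τ a) ⬝ᵥ M⁻¹.mulVec (V τ a))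
          - (gradφ (X τ a) ⬝ᵥ M⁻¹.mulVec (V τ a)) * φ (X 0 a) := by
      intro a; simp only [gradEstimator]; ring
    rw [integral_congr_ae (Eventually.of_forall hpt), integral_sub ic ib]
    have hcτ : ∫ a, φ (X τ a) * (gradφ (X τ a) ⬝ᵥ M⁻¹.mulVec (V τ a)) ∂μ = 0 := by
      rw [hIval τ hτ _ hcc]; exact Ic
    rw [hcτ]; ring
  have hMlim : Tendsto (fun τ => ∫ a, gradEstimator φ gradφ M (X τ a) (X 0 a) (V τ a) ∂μ)
      atTop (nhds 0) := by
    have h := Tm4.neg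
    rw [neg_zero] at h
    exact Tendsto.congr' (hMev.mono fun τ hτ => hτ.symm) h
  -- reversibility: the reversed estimator has the same first and second moments
  have hquadm : ∀ τ : ℝ, Measurable fun a => (X τ a, V τ a, X 0 a, V 0 a) :=
    fun τ => (hXmeas τ).prodMk ((hVmeas τ).prodMk ((hXmeas 0).prodMk (hVmeas 0)))
  have hquadm' : ∀ τ : ℝ, Measurable fun a => (X 0 a, -V 0 a, X τ a, -V τ a) :=
    fun τ => (hXmeas 0).prodMk (((hVmeas 0).neg).prodMk ((hXmeas τ).prodMk (hVmeas τ).neg))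
  have hrevI : ∀ (τ : ℝ), 0 ≤ τ →
      ∀ F : (Fin d → ℝ) × (Fin d → ℝ) × (Fin d → ℝ) × (Fin d → ℝ) → ℝ, Continuous F →
      ∫ a, F (X τ a, V τ a, X 0 a, V 0 a) ∂μ = ∫ a, F (X 0 a, -V 0 a, X τ a, -V τ a) ∂μ := by
    intro τ hτ F hF
    rw [← integral_map (hquadm τ).aemeasurable hF.aestronglyMeasurable, hrev τ hτ,
      integral_map (hquadm' τ).aemeasurable hF.aestronglyMeasurable]
  have hGc : Continuous fun q : (Fin d → ℝ) × (Fin d → ℝ) × (Fin d → ℝ) × (Fin d → ℝ) =>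
      gradEstimator φ gradφ M q.2.2.1 q.1 (-q.2.2.2) := by
    have c1 : Continuous fun q : (Fin d → ℝ) × (Fin d → ℝ) × (Fin d → ℝ) × (Fin d → ℝ) =>
        q.2.2.1 := continuous_fst.comp (continuous_snd.comp continuous_snd)
    have c2 : Continuous fun q : (Fin d → ℝ) × (Fin d → ℝ) × (Fin d → ℝ) × (Fin d → ℝ) =>
        q.1 := continuous_fst
    have c3 : Continuous fun q : (Fin d → ℝ) × (Fin d → ℝ) × (Fin d → ℝ) × (Fin d → ℝ) =>
        q.2.2.2 := continuous_snd.comp (continuous_snd.comp continuous_snd)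
    exact ((hφc.comp c1).sub (hφc.comp c2)).mul
      ((hgc.comp c1).dotProduct (continuous_const.matrix_mulVec c3.neg))
  have hhatmean : ∀ (τ : ℝ), 0 ≤ τ →
      (∫ a, gradEstimator φ gradφ M (X 0 a) (X τ a) (-V 0 a) ∂μ)
      = ∫ a, gradEstimator φ gradφ M (X τ a) (X 0 a) (V τ a) ∂μ := by
    intro τ hτ
    have h := hrevI τ hτ _ hGc
    simpa using h
  have hhatsq : ∀ (τ : ℝ), 0 ≤ τ →
      (∫ a, gradEstimator φ gradφ M (X 0 a) (X τ a) (-V 0 a) ^ 2 ∂μ)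
      = ∫ a, gradEstimator φ gradφ M (X τ a) (X 0 a) (V τ a) ^ 2 ∂μ := by
    intro τ hτ
    have h := hrevI τ hτ
      (fun q => gradEstimator φ gradφ M q.2.2.1 q.1 (-q.2.2.2) ^ 2) (hGc.pow 2)
    simpa using h
  have hhatlim : Tendsto (fun τ => ∫ a, gradEstimator φ gradφ M (X 0 a) (X τ a) (-V 0 a) ∂μ)
      atTop (nhds 0) := by
    refine Tendsto.congr' ?_ hMlim
    filter_upwards [eventually_ge_atTop (0 : ℝ)] with τ hτ
    exact (hhatmean τ hτ).symm
  -- Part 1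
  have part1 : Tendsto (fun τ =>
      (∫ a, gradEstimator φ gradφ M (X τ a) (X 0 a) (V τ a) *
        gradEstimator φ gradφ M (X 0 a) (X τ a) (-V 0 a) ∂μ) -
      (∫ a, gradEstimator φ gradφ M (X τ a) (X 0 a) (V τ a) ∂μ) *
        ∫ a, gradEstimator φ gradφ M (X 0 a) (X τ a) (-V 0 a) ∂μ)
      atTop (nhds 0) := by
    have h := hPlim.sub (hMlim.mul hhatlim)
    norm_num at h
    exact h
  refine ⟨part1, ?_⟩
  intro hpos
  -- variance identity
  have hgvar : ∀ (τ : ℝ), 0 ≤ τ →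
      variance (fun a => (1 / 2) * (gradEstimator φ gradφ M (X τ a) (X 0 a) (V τ a) +
        gradEstimator φ gradφ M (X 0 a) (X τ a) (-V 0 a))) μ
      = (variance (fun a => gradEstimator φ gradφ M (X τ a) (X 0 a) (V τ a)) μ +
        ((∫ a, gradEstimator φ gradφ M (X τ a) (X 0 a) (V τ a) *
          gradEstimator φ gradφ M (X 0 a) (X τ a) (-V 0 a) ∂μ) -
        (∫ a, gradEstimator φ gradφ M (X τ a) (X 0 a) (V τ a) ∂μ) *
          ∫ a, gradEstimator φ gradφ M (X 0 a) (X τ a) (-V 0 a) ∂μ)) / 2 := by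
    intro τ hτ
    have h2δ := hδL2 τ
    have h2h := hδrevL2 τ
    have iδ2 : Integrable (fun a => gradEstimator φ gradφ M (X τ a) (X 0 a) (V τ a) ^ 2) μ :=
      h2δ.integrable_sq
    have ih2 : Integrable (fun a => gradEstimator φ gradφ M (X 0 a) (X τ a) (-V 0 a) ^ 2) μ :=
      h2h.integrable_sq
    have iδh : Integrable (fun a => gradEstimator φ gradφ M (X τ a) (X 0 a) (V τ a) *
        gradEstimator φ gradφ M (X 0 a) (X τ a) (-V 0 a)) μ :=
      memL2_mul_integrable h2δ h2h
    have iδ : Integrable (fun a => gradEstimator φ gradφ M (X τ a) (X 0 a) (V τ a)) μ :=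
      h2δ.integrable one_le_two
    have ih : Integrable (fun a => gradEstimator φ gradφ M (X 0 a) (X τ a) (-V 0 a)) μ :=
      h2h.integrable one_le_two
    rw [variance_eq_sub (hgL2 τ), variance_eq_sub (hδL2 τ)]
    simp only [Pi.pow_apply]
    have hpt : ∀ a, ((1 / 2 : ℝ) * (gradEstimator φ gradφ M (X τ a) (X 0 a) (V τ a) +
        gradEstimator φ gradφ M (X 0 a) (X τ a) (-V 0 a))) ^ 2
        = (1 / 4) * gradEstimator φ gradφ M (X τ a) (X 0 a) (V τ a) ^ 2 +
          ((1 / 2) * (gradEstimator φ gradφ M (X τ a) (X 0 a) (V τ a) *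
            gradEstimator φ gradφ M (X 0 a) (X τ a) (-V 0 a)) +
           (1 / 4) * gradEstimator φ gradφ M (X 0 a) (X τ a) (-V 0 a) ^ 2) := by
      intro a; ring
    have e1 : ∫ a, ((1 / 2 : ℝ) * (gradEstimator φ gradφ M (X τ a) (X 0 a) (V τ a) +
        gradEstimator φ gradφ M (X 0 a) (X τ a) (-V 0 a))) ^ 2 ∂μ
        = (1 / 4) * (∫ a, gradEstimator φ gradφ M (X τ a) (X 0 a) (V τ a) ^ 2 ∂μ) +
          ((1 / 2) * (∫ a, gradEstimator φ gradφ M (X τ a) (X 0 a) (V τ a) *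
            gradEstimator φ gradφ M (X 0 a) (X τ a) (-V 0 a) ∂μ) +
           (1 / 4) * ∫ a, gradEstimator φ gradφ M (X 0 a) (X τ a) (-V 0 a) ^ 2 ∂μ) := by
      have j1 : Integrable (fun a => (1 / 4 : ℝ) *
          gradEstimator φ gradφ M (X τ a) (X 0 a) (V τ a) ^ 2) μ := iδ2.const_mul _
      have j2 : Integrable (fun a => (1 / 2 : ℝ) *
          (gradEstimator φ gradφ M (X τ a) (X 0 a) (V τ a) *
          gradEstimator φ gradφ M (X 0 a) (X τ a) (-V 0 a))) μ := iδh.const_mul _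
      have j3 : Integrable (fun a => (1 / 4 : ℝ) *
          gradEstimator φ gradφ M (X 0 a) (X τ a) (-V 0 a) ^ 2) μ := ih2.const_mul _
      have j23 : Integrable (fun a => (1 / 2 : ℝ) *
          (gradEstimator φ gradφ M (X τ a) (X 0 a) (V τ a) *
          gradEstimator φ gradφ M (X 0 a) (X τ a) (-V 0 a)) +
          (1 / 4 : ℝ) * gradEstimator φ gradφ M (X 0 a) (X τ a) (-V 0 a) ^ 2) μ := j2.add j3
      rw [integral_congr_ae (Eventually.of_forall hpt),
        integral_add j1 j23, integral_add j2 j3,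
        integral_const_mul, integral_const_mul, integral_const_mul]
    have e2 : ∫ a, (1 / 2 : ℝ) * (gradEstimator φ gradφ M (X τ a) (X 0 a) (V τ a) +
        gradEstimator φ gradφ M (X 0 a) (X τ a) (-V 0 a)) ∂μ
        = (1 / 2) * ((∫ a, gradEstimator φ gradφ M (X τ a) (X 0 a) (V τ a) ∂μ) +
          ∫ a, gradEstimator φ gradφ M (X 0 a) (X τ a) (-V 0 a) ∂μ) := by
      rw [integral_const_mul, integral_add iδ ih]
    rw [e1, e2, hhatsq τ hτ, hhatmean τ hτ]
    ring
  -- eventually the variance of δ is bounded away from 0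
  have hbd : IsBoundedUnder (· ≥ ·) atTop
      (fun τ => variance (fun a => gradEstimator φ gradφ M (X τ a) (X 0 a) (V τ a)) μ) :=
    ⟨0, eventually_map.mpr (Eventually.of_forall fun τ => variance_nonneg _ _)⟩
  have hev2 : ∀ᶠ τ in atTop,
      (Filter.liminf (fun τ => variance
        (fun a => gradEstimator φ gradφ M (X τ a) (X 0 a) (V τ a)) μ) atTop) / 2 <
      variance (fun a => gradEstimator φ gradφ M (X τ a) (X 0 a) (V τ a)) μ :=
    eventually_lt_of_lt_liminf (half_lt_self hpos) hbd
  set L := Filter.liminf (fun τ => variance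
    (fun a => gradEstimator φ gradφ M (X τ a) (X 0 a) (V τ a)) μ) atTop with hLdef
  have htail : Tendsto (fun τ =>
      ((∫ a, gradEstimator φ gradφ M (X τ a) (X 0 a) (V τ a) *
        gradEstimator φ gradφ M (X 0 a) (X τ a) (-V 0 a) ∂μ) -
      (∫ a, gradEstimator φ gradφ M (X τ a) (X 0 a) (V τ a) ∂μ) *
        ∫ a, gradEstimator φ gradφ M (X 0 a) (X τ a) (-V 0 a) ∂μ) /
      (2 * variance (fun a => gradEstimator φ gradφ M (X τ a) (X 0 a) (V τ a)) μ))
      atTop (nhds 0) := by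
    apply squeeze_zero_norm' (a := fun τ =>
      |(∫ a, gradEstimator φ gradφ M (X τ a) (X 0 a) (V τ a) *
        gradEstimator φ gradφ M (X 0 a) (X τ a) (-V 0 a) ∂μ) -
      (∫ a, gradEstimator φ gradφ M (X τ a) (X 0 a) (V τ a) ∂μ) *
        ∫ a, gradEstimator φ gradφ M (X 0 a) (X τ a) (-V 0 a) ∂μ| / L)
    · filter_upwards [hev2] with τ hτ
      have hv : (0 : ℝ) < variance
          (fun a => gradEstimator φ gradφ M (X τ a) (X 0 a) (V τ a)) μ := by
        have : (0 : ℝ) < L / 2 := by positivity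
        linarith
      rw [Real.norm_eq_abs, abs_div, abs_of_pos (by positivity : (0 : ℝ) < 2 *
        variance (fun a => gradEstimator φ gradφ M (X τ a) (X 0 a) (V τ a)) μ)]
      apply div_le_div_of_nonneg_left (abs_nonneg _) hpos
      linarith
    · have h := part1.abs.div_const L
      simpa using h
  have hratio_ev : ∀ᶠ τ in atTop,
      variance (fun a => (1 / 2) * (gradEstimator φ gradφ M (X τ a) (X 0 a) (V τ a) +
        gradEstimator φ gradφ M (X 0 a) (X τ a) (-V 0 a))) μ /
      variance (fun a => gradEstimator φ gradφ M (X τ a) (X 0 a) (V τ a)) μ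
      = 1 / 2 +
      ((∫ a, gradEstimator φ gradφ M (X τ a) (X 0 a) (V τ a) *
        gradEstimator φ gradφ M (X 0 a) (X τ a) (-V 0 a) ∂μ) -
      (∫ a, gradEstimator φ gradφ M (X τ a) (X 0 a) (V τ a) ∂μ) *
        ∫ a, gradEstimator φ gradφ M (X 0 a) (X τ a) (-V 0 a) ∂μ) /
      (2 * variance (fun a => gradEstimator φ gradφ M (X τ a) (X 0 a) (V τ a)) μ) := by
    filter_upwards [hev2, eventually_ge_atTop (0 : ℝ)] with τ h1 h2
    have hv : (0 : ℝ) < variance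
        (fun a => gradEstimator φ gradφ M (X τ a) (X 0 a) (V τ a)) μ := by
      have : (0 : ℝ) < L / 2 := by positivity
      linarith
    rw [hgvar τ h2]
    field_simp
    try ring
  have hfinal := (tendsto_const_nhds (x := (1 / 2 : ℝ))).add htail
  rw [add_zero] at hfinal
  exact Tendsto.congr' (hratio_ev.mono fun τ h => h.symm) hfinal
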